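/- Let n be a positive integer and let u, η be real numbers with u > 0 > η, u ≠ -η, satisfying u² - η² = (2/((n+1)(n+2)))(u^{n+2} - η^{n+2}). Then (Σ_{k=1}^{n} k u^{n-k} η^{k-1})(u - u^{n+1}/(n+1)) + (Σ_{k=1}^{n} k η^{n-k} u^{k-1})(η - η^{n+1}/(n+1)) < 0. -/

import Mathlib

open Finset

set_option maxHeartbeats 1000000

private lemma pull_x (x y : ℝ) (n : ℕ) (f : ℕ → ℝ) :
    ∑ j ∈ range (n + 1), f j * x ^ (n - j) * y ^ j
      = x * ∑ j ∈ range n, f j * x ^ (n - 1 - j) * y ^ j + f n * y ^ n := by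
  rw [Finset.sum_range_succ, Finset.mul_sum]
  congr 1
  · apply Finset.sum_congr rfl
    intro j hj
    have hj' : j < n := Finset.mem_range.mp hj
    have h : n - j = (n - 1 - j) + 1 := by omega
    rw [h, pow_succ]
    ring
  · simp

private lemma geom_aux (x y : ℝ) : ∀ n : ℕ,
    (x - y) * ∑ j ∈ range n, x ^ (n - 1 - j) * y ^ j = x ^ n - y ^ n := by
  intro n
  induction n with
  | zero => simp
  | succ n ih =>
    have h := pull_x x y n (fun _ => (1 : ℝ))
    simp only [Nat.add_sub_cancel, one_mul] at h ⊢
    rw [h]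
    linear_combination x * ih

private lemma aux1 (x y : ℝ) : ∀ n : ℕ,
    (x - y) * ∑ j ∈ range n, ((j : ℝ) + 1) * x ^ (n - 1 - j) * y ^ j
      = x * (∑ j ∈ range n, x ^ (n - 1 - j) * y ^ j) - (n : ℝ) * y ^ n := by
  intro n
  induction n with
  | zero => simp
  | succ n ih =>
    have h1 := pull_x x y n (fun j => ((j : ℝ) + 1))
    have h2 := pull_x x y n (fun _ => (1 : ℝ))
    simp only [Nat.add_sub_cancel, one_mul] at h1 h2 ⊢
    rw [h1, h2]
    push_cast
    linear_combination x * ih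

private lemma refl_aux (x y : ℝ) (n : ℕ) :
    ∑ j ∈ range n, x ^ (n - 1 - j) * y ^ j = ∑ j ∈ range n, y ^ (n - 1 - j) * x ^ j := by
  rw [← Finset.sum_range_reflect (fun j => y ^ (n - 1 - j) * x ^ j) n]
  apply Finset.sum_congr rfl
  intro j hj
  have hj' : j < n := Finset.mem_range.mp hj
  have h : n - 1 - (n - 1 - j) = j := by omega
  rw [h]
  ring


/-- The key estimate (4.12): if `u > 0 > η`, `u ≠ -η`, and
`u² - η² = (2/((n+1)(n+2)))(u^(n+2) - η^(n+2))`, then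
`(∑_{k=1}^n k u^(n-k) η^(k-1))(u - u^(n+1)/(n+1))
  + (∑_{k=1}^n k η^(n-k) u^(k-1))(η - η^(n+1)/(n+1)) < 0`. -/
theorem abelian_inequality (n : ℕ) (hn : 0 < n) (u η : ℝ)
    (hu : 0 < u) (hη : η < 0) (hne' : u ≠ -η)
    (hcon : u ^ 2 - η ^ 2 =
      (2 / (((n : ℝ) + 1) * ((n : ℝ) + 2))) * (u ^ (n + 2) - η ^ (n + 2))) :
    (∑ k ∈ Finset.Icc 1 n, (k : ℝ) * u ^ (n - k) * η ^ (k - 1)) *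
        (u - u ^ (n + 1) / ((n : ℝ) + 1)) +
      (∑ k ∈ Finset.Icc 1 n, (k : ℝ) * η ^ (n - k) * u ^ (k - 1)) *
        (η - η ^ (n + 1) / ((n : ℝ) + 1)) < 0 := by
  have hn1 : (0:ℝ) < (n:ℝ) := by exact_mod_cast hn
  have hd : (0:ℝ) < u - η := by linarith
  have hs : u + η ≠ 0 := fun h => hne' (by linarith)
  -- convert the Icc sums to range sums
  have e1 : (∑ k ∈ Finset.Icc 1 n, (k : ℝ) * u ^ (n - k) * η ^ (k - 1))
      = ∑ j ∈ range n, ((j:ℝ) + 1) * u ^ (n - 1 - j) * η ^ j := by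
    rw [show Finset.Icc 1 n = Finset.Ico 1 (n+1) by rfl, Finset.sum_Ico_eq_sum_range]
    apply Finset.sum_congr (by congr 1)
    intro j hj
    have h1 : n - (1 + j) = n - 1 - j := by omega
    have h2 : 1 + j - 1 = j := by omega
    rw [h1, h2]
    push_cast
    ring
  have e2 : (∑ k ∈ Finset.Icc 1 n, (k : ℝ) * η ^ (n - k) * u ^ (k - 1))
      = ∑ j ∈ range n, ((j:ℝ) + 1) * η ^ (n - 1 - j) * u ^ j := by
    rw [show Finset.Icc 1 n = Finset.Ico 1 (n+1) by rfl, Finset.sum_Ico_eq_sum_range]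
    apply Finset.sum_congr (by congr 1)
    intro j hj
    have h1 : n - (1 + j) = n - 1 - j := by omega
    have h2 : 1 + j - 1 = j := by omega
    rw [h1, h2]
    push_cast
    ring
  rw [e1, e2]
  set S1 : ℝ := ∑ j ∈ range n, ((j:ℝ) + 1) * u ^ (n - 1 - j) * η ^ j with hS1
  set S2 : ℝ := ∑ j ∈ range n, ((j:ℝ) + 1) * η ^ (n - 1 - j) * u ^ j with hS2
  set R : ℝ := ∑ j ∈ range n, u ^ (n - 1 - j) * η ^ j with hR
  set G : ℝ := ∑ j ∈ range (n+1), (u^2) ^ (n - j) * (η^2) ^ j with hG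
  -- key identities
  have h1 : (u - η) * S1 = u * R - (n:ℝ) * η ^ n := aux1 u η n
  have h2 : (η - u) * S2 = η * R - (n:ℝ) * u ^ n := by
    have := aux1 η u n
    rwa [refl_aux η u n, ← hR] at this
  have h4 : (u - η) * R = u ^ n - η ^ n := geom_aux u η n
  have hwu : (u^2) ^ (n+1) = u ^ (n+2) * u ^ n := by
    rw [← pow_mul, ← pow_add]; congr 1; omega
  have hwe : (η^2) ^ (n+1) = η ^ (n+2) * η ^ n := by
    rw [← pow_mul, ← pow_add]; congr 1; omega
  have h5 : (u^2 - η^2) * G = u ^ (n+2) * u ^ n - η ^ (n+2) * η ^ n := by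
    have h := geom_aux (u^2) (η^2) (n+1)
    simp only [Nat.add_sub_cancel] at h
    rw [← hwu, ← hwe]
    exact h
  -- the constraint with cleared denominators
  have hnn : ((n:ℝ) + 1) * ((n:ℝ) + 2) ≠ 0 := by positivity
  have hC : ((n:ℝ) + 1) * ((n:ℝ) + 2) * (u^2 - η^2) = 2 * (u ^ (n+2) - η ^ (n+2)) := by
    field_simp at hcon
    linarith [hcon]
  -- u^n ≠ η^n
  have hune : u ^ n ≠ η ^ n := by
    intro h
    have h1' : |u| ^ n = |η| ^ n := by
      rw [← abs_pow, ← abs_pow, h]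
    have h2' : |u| = |η| := by
      rw [pow_left_inj₀ (abs_nonneg u) (abs_nonneg η) hn.ne'] at h1'
      exact h1'
    rw [abs_of_pos hu, abs_of_neg hη] at h2'
    exact hne' h2'
  have hD : u^2 - η^2 ≠ 0 := by
    have : (u - η) * (u + η) ≠ 0 := mul_ne_zero hd.ne' hs
    intro h; apply this; linear_combination h
  -- strict AM-GM: G > (n+1) u^n η^n
  have hg : ((n:ℝ) + 1) * (u ^ n * η ^ n) < G := by
    have key : ∀ j ∈ range (n+1),
        (u ^ (n - j) * η ^ j - u ^ j * η ^ (n - j))^2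
          = (u^2) ^ (n - j) * (η^2) ^ j + (u^2) ^ j * (η^2) ^ (n - j)
            - 2 * (u ^ n * η ^ n) := by
      intro j hj
      have hj' : j ≤ n := by
        have := Finset.mem_range.mp hj; omega
      have hA : u ^ (n - j) * u ^ j = u ^ n := by
        rw [← pow_add]; congr 1; omega
      have hB : η ^ (n - j) * η ^ j = η ^ n := by
        rw [← pow_add]; congr 1; omega
      have e1 : (u^2) ^ (n-j) = (u ^ (n-j))^2 := by
        rw [← pow_mul, ← pow_mul, Nat.mul_comm]
      have e2 : (η^2) ^ j = (η ^ j)^2 := by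
        rw [← pow_mul, ← pow_mul, Nat.mul_comm]
      have e3 : (u^2) ^ j = (u ^ j)^2 := by
        rw [← pow_mul, ← pow_mul, Nat.mul_comm]
      have e4 : (η^2) ^ (n-j) = (η ^ (n-j))^2 := by
        rw [← pow_mul, ← pow_mul, Nat.mul_comm]
      rw [e1, e2, e3, e4]
      linear_combination (-2 * (η ^ j * η ^ (n-j))) * hA - 2 * (u ^ n) * hB
    have hrefl : (∑ j ∈ range (n+1), (u^2) ^ j * (η^2) ^ (n - j)) = G := by
      rw [hG, ← Finset.sum_range_reflect (fun j => (u^2) ^ j * (η^2) ^ (n - j)) (n+1)]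
      apply Finset.sum_congr rfl
      intro j hj
      have hj' : j < n + 1 := Finset.mem_range.mp hj
      have hh2 : n + 1 - 1 - j = n - j := by omega
      rw [hh2, show n - (n - j) = j from by omega]
    have hsum : (∑ j ∈ range (n+1), (u ^ (n - j) * η ^ j - u ^ j * η ^ (n - j))^2)
        = 2 * G - 2 * ((n:ℝ) + 1) * (u ^ n * η ^ n) := by
      rw [Finset.sum_congr rfl key]
      rw [Finset.sum_sub_distrib, Finset.sum_add_distrib, hrefl, ← hG,
        Finset.sum_const, Finset.card_range]
      push_cast
      ring
    have hmem : (0:ℕ) ∈ range (n+1) := Finset.mem_range.mpr (by omega)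
    have hle := Finset.single_le_sum
      (f := fun j => (u ^ (n - j) * η ^ j - u ^ j * η ^ (n - j))^2)
      (fun i _ => sq_nonneg _) hmem
    simp only [Nat.sub_zero, pow_zero, mul_one, one_mul] at hle
    have hpos : 0 < (u ^ n - η ^ n)^2 := by
      apply sq_pos_of_ne_zero
      exact sub_ne_zero.mpr hune
    nlinarith [hle, hsum, hpos]
  -- the constrained identity 2(G + u^n η^n) = (n+1)(n+2)(u^n + η^n)
  have hC2 : 2 * (G + u ^ n * η ^ n) = ((n:ℝ) + 1) * ((n:ℝ) + 2) * (u ^ n + η ^ n) := by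
    apply mul_right_cancel₀ hD
    linear_combination 2 * h5 - (u ^ n + η ^ n) * hC
  -- the main identity (division-free form)
  have hE2 : S1 * (((n:ℝ) + 1) * u - u ^ (n + 1)) + S2 * (((n:ℝ) + 1) * η - η ^ (n + 1))
      = (n:ℝ) * (u ^ n * η ^ n - ((n:ℝ) + 1) * (u ^ n + η ^ n) / 2) := by
    apply mul_right_cancel₀ hd.ne'
    linear_combination (((n:ℝ)+1) * u - u ^ (n + 1)) * h1
      - (((n:ℝ)+1) * η - η ^ (n + 1)) * h2
      - ((n:ℝ) * ((n:ℝ)+1) / 2 * (u + η)) * h4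
      + (R / 2) * hC
  -- conclude
  have hfin : 2 * ((n:ℝ) + 2) * (S1 * (((n:ℝ) + 1) * u - u ^ (n + 1))
        + S2 * (((n:ℝ) + 1) * η - η ^ (n + 1)))
      = 2 * (n:ℝ) * (((n:ℝ) + 1) * (u ^ n * η ^ n) - G) := by
    linear_combination 2 * ((n:ℝ) + 2) * hE2 + (n:ℝ) * hC2
  have hneg : 2 * (n:ℝ) * (((n:ℝ) + 1) * (u ^ n * η ^ n) - G) < 0 := by
    apply mul_neg_of_pos_of_neg (by positivity)
    linarith [hg]
  have hn1' : ((n:ℝ) + 1) ≠ 0 := by positivity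
  have hscale : S1 * (((n:ℝ) + 1) * u - u ^ (n + 1)) + S2 * (((n:ℝ) + 1) * η - η ^ (n + 1))
      = ((n:ℝ) + 1) * (S1 * (u - u ^ (n + 1) / ((n : ℝ) + 1))
        + S2 * (η - η ^ (n + 1) / ((n : ℝ) + 1))) := by
    field_simp
  by_contra hcontra
  push_neg at hcontra
  have h0 : 0 ≤ S1 * (((n:ℝ) + 1) * u - u ^ (n + 1)) + S2 * (((n:ℝ) + 1) * η - η ^ (n + 1)) := by
    rw [hscale]
    exact mul_nonneg (by positivity) hcontra
  nlinarith [hfin, hneg, h0]
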